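/- arXiv:2510.20580 — 4 statements merged into one kernel-verified Lean document; each statement's English description precedes it below -/
import Mathlib

section
/- Let b > 0 and let U : [0, b/2) → ℝ be continuously differentiable with U'(s) ≥ 0 for all s ∈ [0, b/2) and lim_{s→(b/2)⁻} U(s) = +∞. If u : [0, √b] → [0, ∞) is continuous and the Lebesgue integral ∫_{(0,√b)} U'(r²/2)·u(r) dr (an integral of a nonnegative function) is finite, then u(√b) = 0. -/
open MeasureTheory Filter Set
open scoped ENNReal Topology

/-- If `U : [0, b/2) → ℝ` is continuously differentiable with nonnegative
derivative and `U(s) → +∞` as `s → (b/2)⁻`, and `u : [0, √b] → [0, ∞)` is continuous with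
`∫_{(0,√b)} U'(r²/2)·u(r) dr < ∞` (Lebesgue integral of a nonnegative function), then
`u(√b) = 0`. -/
theorem stmt_0
    (b : ℝ) (hb : 0 < b)
    (U U' : ℝ → ℝ)
    (hUderiv : ∀ s ∈ Set.Ico (0:ℝ) (b/2), HasDerivAt U (U' s) s)
    (hU'cont : ContinuousOn U' (Set.Ico (0:ℝ) (b/2)))
    (hU'nonneg : ∀ s ∈ Set.Ico (0:ℝ) (b/2), 0 ≤ U' s)
    (hUtop : Tendsto U (𝓝[<] (b/2)) atTop)
    (u : ℝ → ℝ)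
    (hucont : ContinuousOn u (Set.Icc (0:ℝ) (Real.sqrt b)))
    (hunonneg : ∀ r ∈ Set.Icc (0:ℝ) (Real.sqrt b), 0 ≤ u r)
    (hfin : ∫⁻ r in Set.Ioo (0:ℝ) (Real.sqrt b),
        ENNReal.ofReal (U' (r ^ 2 / 2) * u r) < ⊤) :
    u (Real.sqrt b) = 0 := by
  set sb := Real.sqrt b with hsbdef
  have hsb : 0 < sb := Real.sqrt_pos.2 hb
  have hsbsq : sb ^ 2 = b := Real.sq_sqrt hb.le
  by_contra hne
  have hsbmem : sb ∈ Set.Icc (0:ℝ) sb := ⟨hsb.le, le_rfl⟩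
  have hc : 0 < u sb := lt_of_le_of_ne (hunonneg sb hsbmem) (Ne.symm hne)
  set c := u sb with hcdef
  -- Step A: continuity gives ε with u r > c/2 near sb
  obtain ⟨ε, hε, hεu⟩ : ∃ ε > 0, ∀ r ∈ Set.Icc (0:ℝ) sb, dist r sb < ε → c / 2 < u r := by
    have := hucont sb hsbmem
    rw [Metric.continuousWithinAt_iff] at this
    obtain ⟨δ, hδ, h⟩ := this (c / 2) (by linarith)
    refine ⟨δ, hδ, fun r hr hd => ?_⟩
    have := h hr hd
    rw [Real.dist_eq, abs_lt] at this
    linarith [this.1]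
  set a := max 0 (sb - ε / 2) with hadef
  have ha0 : 0 ≤ a := le_max_left _ _
  have hab : a < sb := max_lt hsb (by linarith)
  -- facts for r ∈ Ioo a sb
  have hmem : ∀ r ∈ Set.Ioo a sb, r ^ 2 / 2 ∈ Set.Ico (0:ℝ) (b / 2) := by
    rintro r ⟨hr1, hr2⟩
    have hr0 : 0 ≤ r := le_trans ha0 hr1.le
    constructor
    · positivity
    · have : r ^ 2 < sb ^ 2 := by nlinarith
      rw [hsbsq] at this; linarith
  have hular : ∀ r ∈ Set.Ioo a sb, c / 2 < u r := by
    rintro r ⟨hr1, hr2⟩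
    refine hεu r ⟨le_trans ha0 hr1.le, hr2.le⟩ ?_
    rw [Real.dist_eq, abs_lt]
    constructor
    · have : sb - ε / 2 ≤ a := le_max_right _ _
      linarith
    · linarith
  -- Step C: J < ⊤
  set J := ∫⁻ r in Set.Ioo a sb, ENNReal.ofReal (U' (r ^ 2 / 2) * r) with hJdef
  set k := ENNReal.ofReal (c / (2 * sb)) with hkdef
  have hkpos : 0 < c / (2 * sb) := by positivity
  have hk0 : k ≠ 0 := by
    simp [hkdef, ENNReal.ofReal_eq_zero, not_le, hkpos]
  have hkJ : k * J ≤ ∫⁻ r in Set.Ioo a sb, ENNReal.ofReal (U' (r ^ 2 / 2) * u r) := by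
    rw [hJdef, ← lintegral_const_mul' _ _ ENNReal.ofReal_ne_top]
    refine lintegral_mono_ae ((ae_restrict_iff' measurableSet_Ioo).2 (ae_of_all _ fun r hr => ?_))
    rw [← ENNReal.ofReal_mul hkpos.le]
    apply ENNReal.ofReal_le_ofReal
    have hU'r := hU'nonneg _ (hmem r hr)
    have hru : c / 2 < u r := hular r hr
    have hr0 : 0 ≤ r := le_trans ha0 hr.1.le
    have h1 : c / (2 * sb) * r ≤ c / 2 := by
      have : c / (2 * sb) * r ≤ c / (2 * sb) * sb := by
        apply mul_le_mul_of_nonneg_left hr.2.le hkpos.le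
      have h2 : c / (2 * sb) * sb = c / 2 := by field_simp
      linarith
    calc c / (2 * sb) * (U' (r ^ 2 / 2) * r) = U' (r ^ 2 / 2) * (c / (2 * sb) * r) := by ring
      _ ≤ U' (r ^ 2 / 2) * u r := by nlinarith
  have hsub : Set.Ioo a sb ⊆ Set.Ioo (0:ℝ) sb := fun r hr => ⟨lt_of_le_of_lt ha0 hr.1, hr.2⟩
  have hJI : (∫⁻ r in Set.Ioo a sb, ENNReal.ofReal (U' (r ^ 2 / 2) * u r)) < ⊤ :=
    lt_of_le_of_lt (lintegral_mono_set hsub) hfin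
  have hJtop : J ≠ ⊤ := by
    intro hJ
    rw [hJ, ENNReal.mul_top hk0] at hkJ
    exact (lt_irrefl ⊤ (lt_of_le_of_lt hkJ hJI)).elim
  -- Step D: for t ∈ (a, sb), U (t²/2) - U (a²/2) ≤ J.toReal
  have hbound : ∀ t ∈ Set.Ioo a sb, U (t ^ 2 / 2) - U (a ^ 2 / 2) ≤ J.toReal := by
    rintro t ⟨hat, hts⟩
    have hmemIcc : ∀ r ∈ Set.Icc a t, r ^ 2 / 2 ∈ Set.Ico (0:ℝ) (b / 2) := by
      rintro r ⟨hr1, hr2⟩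
      have hr0 : 0 ≤ r := le_trans ha0 hr1
      constructor
      · positivity
      · have : r ^ 2 < sb ^ 2 := by nlinarith
        rw [hsbsq] at this; linarith
    have hderiv : ∀ r ∈ Set.uIcc a t, HasDerivAt (fun x => U (x ^ 2 / 2)) (U' (r ^ 2 / 2) * r) r := by
      intro r hr
      rw [Set.uIcc_of_le hat.le] at hr
      have hf : HasDerivAt (fun x : ℝ => x ^ 2 / 2) r r := by
        simpa using (hasDerivAt_pow 2 r).div_const 2
      exact (hUderiv _ (hmemIcc r hr)).comp r hf
    have hcontOn : ContinuousOn (fun r => U' (r ^ 2 / 2) * r) (Set.Icc a t) := by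
      apply ContinuousOn.mul _ continuousOn_id
      exact hU'cont.comp ((continuous_pow 2).div_const 2).continuousOn hmemIcc
    have hint : IntervalIntegrable (fun r => U' (r ^ 2 / 2) * r) volume a t := by
      rw [← Set.uIcc_of_le hat.le] at hcontOn
      exact hcontOn.intervalIntegrable
    have hftc : ∫ r in a..t, U' (r ^ 2 / 2) * r = U (t ^ 2 / 2) - U (a ^ 2 / 2) :=
      intervalIntegral.integral_eq_sub_of_hasDerivAt hderiv hint
    rw [intervalIntegral.integral_of_le hat.le] at hftc
    have hnn : 0 ≤ᵐ[volume.restrict (Set.Ioc a t)] fun r => U' (r ^ 2 / 2) * r := by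
      refine (ae_restrict_iff' measurableSet_Ioc).2 (ae_of_all _ fun r hr => ?_)
      have hr0 : 0 ≤ r := le_trans ha0 hr.1.le
      have := hU'nonneg _ (hmemIcc r ⟨hr.1.le, hr.2⟩)
      positivity
    have hle1 : ENNReal.ofReal (U (t ^ 2 / 2) - U (a ^ 2 / 2)) ≤
        ∫⁻ r in Set.Ioc a t, ENNReal.ofReal (U' (r ^ 2 / 2) * r) := by
      rw [← hftc]
      exact le_of_eq (ofReal_integral_eq_lintegral_ofReal hint.1 hnn)
    have hle2 : (∫⁻ r in Set.Ioc a t, ENNReal.ofReal (U' (r ^ 2 / 2) * r)) ≤ J :=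
      lintegral_mono_set (fun r hr => ⟨hr.1, lt_of_le_of_lt hr.2 hts⟩)
    have := le_trans hle1 hle2
    exact (ENNReal.ofReal_le_iff_le_toReal hJtop).1 this
  -- Step E: tendsto atTop gives contradiction
  have hsq : Tendsto (fun t : ℝ => t ^ 2 / 2) (𝓝[<] sb) (𝓝[<] (b / 2)) := by
    have hcont : Continuous fun t : ℝ => t ^ 2 / 2 := (continuous_pow 2).div_const 2
    have h1 : Tendsto (fun t : ℝ => t ^ 2 / 2) (𝓝[<] sb) (𝓝 (b / 2)) := by
      have := (hcont.tendsto sb).mono_left (nhdsWithin_le_nhds : 𝓝[<] sb ≤ 𝓝 sb)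
      simpa [hsbsq] using this
    refine tendsto_nhdsWithin_of_tendsto_nhds_of_eventually_within _ h1 ?_
    filter_upwards [Ioo_mem_nhdsLT_of_mem ⟨hab, le_rfl⟩] with t ht
    exact (hmem t ht).2
  have hT : Tendsto (fun t => U (t ^ 2 / 2)) (𝓝[<] sb) atTop := hUtop.comp hsq
  have hmemev : ∀ᶠ t in 𝓝[<] sb, t ∈ Set.Ioo a sb :=
    Ioo_mem_nhdsLT_of_mem ⟨hab, le_rfl⟩
  have hev := (hT.eventually_gt_atTop (J.toReal + U (a ^ 2 / 2))).and hmemev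
  obtain ⟨t, ht1, ht2⟩ := hev.exists
  have := hbound t ht2
  linarith
end

section
/- Let d ≥ 1 be an integer, b > 0, c > 0, and let U : [0, b/2) → ℝ be twice differentiable with U'(s) ≥ 0 and 0 ≤ U''(s) ≤ c·[U'(s)]² for all s ∈ [0, b/2), and lim_{s→(b/2)⁻} U'(s) = +∞. Then the Lebesgue integral over the open Euclidean ball D = B(0, √b) ⊂ ℝ^d of the nonnegative function q ↦ ‖q‖²·[U'(‖q‖²/2)]² is infinite, i.e. ∫_{B(0,√b)} ‖q‖²·[U'(‖q‖²/2)]² dq = +∞. -/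
open MeasureTheory Filter Set
open scoped ENNReal Topology

lemma aux_pow (m : ℕ) {x y : ℝ} (hy : 0 ≤ y) (hxy : y ≤ x) :
    y ^ m * (x - y) ≤ x ^ (m + 1) - y ^ (m + 1) := by
  have h1 : y ^ m ≤ x ^ m := pow_le_pow_left₀ hy hxy m
  have h2 : 0 ≤ y ^ m := pow_nonneg hy m
  have e1 : x ^ (m + 1) = x ^ m * x := pow_succ x m
  have e2 : y ^ (m + 1) = y ^ m * y := pow_succ y m
  have h3 : 0 ≤ x * (x ^ m - y ^ m) := mul_nonneg (hy.trans hxy) (by linarith)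
  nlinarith

lemma aux_key (b c : ℝ) (hb : 0 < b) (hc : 0 < c)
    (U' U'' : ℝ → ℝ)
    (hU'deriv : ∀ s ∈ Set.Ico (0:ℝ) (b/2), HasDerivAt U' (U'' s) s)
    (hU''nonneg : ∀ s ∈ Set.Ico (0:ℝ) (b/2), 0 ≤ U'' s)
    (hU''le : ∀ s ∈ Set.Ico (0:ℝ) (b/2), U'' s ≤ c * (U' s) ^ 2)
    (hU'top : Tendsto U' (𝓝[<] (b/2)) atTop) :
    ∃ s₀ ∈ Set.Ico (0:ℝ) (b/2), ∀ s ∈ Set.Ico s₀ (b/2), (c * (b/2 - s))⁻¹ ≤ U' s := by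
  have hb2 : 0 < b / 2 := by linarith
  -- U' is monotone on the whole interval
  have hU'mono : MonotoneOn U' (Set.Ico (0:ℝ) (b/2)) := by
    apply monotoneOn_of_deriv_nonneg (convex_Ico _ _)
    · exact fun s hs => (hU'deriv s hs).continuousAt.continuousWithinAt
    · intro s hs
      rw [interior_Ico] at hs
      exact ((hU'deriv s ⟨hs.1.le, hs.2⟩).differentiableAt).differentiableWithinAt
    · intro s hs
      rw [interior_Ico] at hs
      have h := hU'deriv s ⟨hs.1.le, hs.2⟩
      rw [h.deriv]
      exact hU''nonneg s ⟨hs.1.le, hs.2⟩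
  -- pick s₀ with U' ≥ 1 from there on
  obtain ⟨s₀, hs₀1, hs₀mem⟩ :=
    ((hU'top.eventually_ge_atTop 1).and (Ioo_mem_nhdsLT_of_mem ⟨hb2, le_refl (b/2)⟩)).exists
  have hs₀Ico : s₀ ∈ Set.Ico (0:ℝ) (b/2) := ⟨hs₀mem.1.le, hs₀mem.2⟩
  refine ⟨s₀, hs₀Ico, ?_⟩
  have hU'pos : ∀ t ∈ Set.Ico s₀ (b/2), 1 ≤ U' t := by
    intro t ht
    exact hs₀1.trans (hU'mono hs₀Ico ⟨hs₀mem.1.le.trans ht.1, ht.2⟩ ht.1)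
  set φ : ℝ → ℝ := fun t => c * t + (U' t)⁻¹ with hφ
  have hφderiv : ∀ t ∈ Set.Ico s₀ (b/2), HasDerivAt φ (c + -U'' t / (U' t) ^ 2) t := by
    intro t ht
    have hne : U' t ≠ 0 := by have := hU'pos t ht; linarith
    exact ((hasDerivAt_id t).const_mul c).add ((hU'deriv t ⟨hs₀mem.1.le.trans ht.1, ht.2⟩).inv hne) |>.congr_deriv (by ring)
  have hφmono : MonotoneOn φ (Set.Ico s₀ (b/2)) := by
    apply monotoneOn_of_deriv_nonneg (convex_Ico _ _)
    · exact fun t ht => (hφderiv t ht).continuousAt.continuousWithinAt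
    · intro t ht
      rw [interior_Ico] at ht
      exact ((hφderiv t ⟨ht.1.le, ht.2⟩).differentiableAt).differentiableWithinAt
    · intro t ht
      rw [interior_Ico] at ht
      have ht' : t ∈ Set.Ico s₀ (b/2) := ⟨ht.1.le, ht.2⟩
      rw [(hφderiv t ht').deriv]
      have htIco : t ∈ Set.Ico (0:ℝ) (b/2) := ⟨hs₀mem.1.le.trans ht'.1, ht.2⟩
      have h1 := hU''le t htIco
      have h2 : (1:ℝ) ≤ U' t := hU'pos t ht'
      have h3 : 0 < (U' t) ^ 2 := by positivity
      have : U'' t / (U' t) ^ 2 ≤ c := by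
        rw [div_le_iff₀ h3]; nlinarith
      have hnd : -U'' t / U' t ^ 2 = -(U'' t / U' t ^ 2) := neg_div _ _
      linarith [this]
  intro s hs
  have hsIco : s ∈ Set.Ico (0:ℝ) (b/2) := ⟨hs₀mem.1.le.trans hs.1, hs.2⟩
  have hU's : (1:ℝ) ≤ U' s := hU'pos s hs
  -- limit argument
  have hlim : Tendsto (fun t => c * t + (U' t)⁻¹) (𝓝[<] (b/2)) (𝓝 (c * (b/2) + 0)) := by
    exact (((continuous_const.mul continuous_id).tendsto (b/2)).mono_left nhdsWithin_le_nhds).add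
      hU'top.inv_tendsto_atTop
  have hev : ∀ᶠ t in 𝓝[<] (b/2), φ s ≤ c * t + (U' t)⁻¹ := by
    filter_upwards [Ioo_mem_nhdsLT_of_mem ⟨hs.2, le_refl (b/2)⟩] with t ht
    exact hφmono hs ⟨hs.1.trans ht.1.le, ht.2⟩ ht.1.le
  have hle : φ s ≤ c * (b/2) + 0 := ge_of_tendsto hlim hev
  have hφs : c * s + (U' s)⁻¹ ≤ c * (b/2) := by simpa [hφ] using hle
  have hinv : (U' s)⁻¹ ≤ c * (b/2 - s) := by linarith [hφs]; 
  have hpos : 0 < (U' s)⁻¹ := by positivity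
  have := inv_anti₀ hpos hinv
  rwa [inv_inv] at this

lemma aux_main
    (d : ℕ) (hd : 1 ≤ d)
    (b c : ℝ) (hb : 0 < b) (hc : 0 < c)
    (U' : ℝ → ℝ)
    (s₀ : ℝ) (hs₀ : s₀ ∈ Set.Ico (0:ℝ) (b/2))
    (hkey : ∀ s ∈ Set.Ico s₀ (b/2), (c * (b/2 - s))⁻¹ ≤ U' s) :
    ∫⁻ q in Metric.ball (0 : EuclideanSpace ℝ (Fin d)) (Real.sqrt b),
        ENNReal.ofReal (‖q‖ ^ 2 * (U' (‖q‖ ^ 2 / 2)) ^ 2) = ⊤ := by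
  classical
  obtain ⟨m, rfl⟩ : ∃ m, d = m + 1 := ⟨d - 1, (Nat.succ_pred_eq_of_pos hd).symm⟩
  haveI : Nonempty (Fin (m + 1)) := ⟨⟨0, Nat.succ_pos m⟩⟩
  set f : EuclideanSpace ℝ (Fin (m + 1)) → ℝ≥0∞ :=
    fun q => ENNReal.ofReal (‖q‖ ^ 2 * (U' (‖q‖ ^ 2 / 2)) ^ 2) with hf
  obtain ⟨a, ha⟩ : ∃ a : ℝ, a = max s₀ (b / 4) := ⟨_, rfl⟩
  have ha0 : 0 < a := by rw [ha]; exact lt_of_lt_of_le (by linarith) (le_max_right _ _)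
  have halt : a < b / 2 := by rw [ha]; exact max_lt hs₀.2 (by linarith)
  have has₀ : s₀ ≤ a := ha ▸ le_max_left _ _
  have hab4 : b / 4 ≤ a := ha ▸ le_max_right _ _
  obtain ⟨ε, hεdef⟩ : ∃ ε : ℝ, ε = b / 2 - a := ⟨_, rfl⟩
  have hε0 : 0 < ε := by rw [hεdef]; linarith
  obtain ⟨sk, hsk⟩ : ∃ sk : ℕ → ℝ, ∀ k, sk k = b / 2 - ε / 2 ^ k := ⟨_, fun _ => rfl⟩
  have h2k : ∀ k : ℕ, (0:ℝ) < 2 ^ k := fun k => by positivity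
  have h2k1 : ∀ k : ℕ, (1:ℝ) ≤ 2 ^ k := fun k => one_le_pow₀ (by norm_num)
  have hgapk : ∀ k : ℕ, 0 < ε / 2 ^ k := fun k => by positivity
  have hgap_le : ∀ k : ℕ, ε / 2 ^ k ≤ ε := fun k => by
    rw [div_le_iff₀ (h2k k)]; nlinarith [h2k1 k]
  have hsk_lt : ∀ k, sk k < b / 2 := fun k => by rw [hsk k]; linarith [hgapk k]
  have hsk_ge : ∀ k, a ≤ sk k := fun k => by rw [hsk k]; linarith [hgap_le k]
  have hsk_pos : ∀ k, 0 < sk k := fun k => lt_of_lt_of_le ha0 (hsk_ge k)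
  have hsk_gap : ∀ k, sk (k+1) - sk k = ε / 2 ^ (k+1) := fun k => by
    rw [hsk, hsk, pow_succ]
    have := h2k k
    field_simp
    ring
  have hsk_mono : ∀ k, sk k ≤ sk (k+1) := fun k => by
    have h1 := hsk_gap k
    have h2 : 0 < ε / 2 ^ (k+1) := hgapk (k+1)
    linarith
  obtain ⟨R, hRdef⟩ : ∃ R : ℕ → ℝ, ∀ k, R k = Real.sqrt (2 * sk k) := ⟨_, fun _ => rfl⟩
  have hR_nonneg : ∀ k, 0 ≤ R k := fun k => (hRdef k) ▸ Real.sqrt_nonneg _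
  have hRsq : ∀ k, R k ^ 2 = 2 * sk k := fun k => by
    rw [hRdef k]; exact Real.sq_sqrt (by linarith [hsk_pos k])
  have hR_mono : ∀ k, R k ≤ R (k+1) := fun k => by
    rw [hRdef, hRdef]; exact Real.sqrt_le_sqrt (by linarith [hsk_mono k])
  have hR_mono' : Monotone R := monotone_nat_of_le_succ hR_mono
  obtain ⟨β, hβdef⟩ : ∃ β : ℝ, β = Real.sqrt (b / 2) := ⟨_, rfl⟩
  have hβ0 : 0 < β := by rw [hβdef]; exact Real.sqrt_pos.2 (by linarith)
  have hR_lb : ∀ k, β ≤ R k := fun k => by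
    rw [hβdef, hRdef]; exact Real.sqrt_le_sqrt (by linarith [hsk_ge k, hab4])
  have hR_ub : ∀ k, R k < Real.sqrt b := fun k => by
    rw [hRdef]
    exact Real.sqrt_lt_sqrt (by linarith [hsk_pos k]) (by linarith [hsk_lt k])
  set S : ℕ → Set (EuclideanSpace ℝ (Fin (m + 1))) :=
    fun k => {q | R k ≤ ‖q‖ ∧ ‖q‖ < R (k+1)} with hS
  have hSmeas : ∀ k, MeasurableSet (S k) := by
    intro k
    have : S k = (fun q : EuclideanSpace ℝ (Fin (m + 1)) => ‖q‖) ⁻¹'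
        Set.Ico (R k) (R (k+1)) := rfl
    rw [this]
    exact measurable_norm measurableSet_Ico
  have hSdisj : Pairwise (Function.onFun Disjoint S) := by
    have H : ∀ i j, i < j → Disjoint (S i) (S j) := by
      intro i j hij
      rw [Set.disjoint_left]
      rintro q ⟨_, h2⟩ ⟨h3, _⟩
      have : R (i+1) ≤ R j := hR_mono' hij
      linarith
    intro i j hij
    rcases hij.lt_or_gt with h | h
    · exact H i j h
    · exact (H j i h).symm
  obtain ⟨B, hBdef⟩ : ∃ B : ℝ≥0∞,
      B = volume (Metric.ball (0 : EuclideanSpace ℝ (Fin (m+1))) 1) := ⟨_, rfl⟩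
  have hBne : B ≠ 0 := by
    rw [hBdef]; exact (Metric.measure_ball_pos volume _ one_pos).ne'
  have hBtop : B ≠ ⊤ := by rw [hBdef]; exact measure_ball_lt_top.ne
  have hfinrank : Module.finrank ℝ (EuclideanSpace ℝ (Fin (m+1))) = m + 1 :=
    finrank_euclideanSpace_fin
  have hSvol : ∀ k, volume (S k) =
      ENNReal.ofReal (R (k+1) ^ (m+1) - R k ^ (m+1)) * B := by
    intro k
    have hdiff : S k = Metric.ball (0 : EuclideanSpace ℝ (Fin (m+1))) (R (k+1)) \
        Metric.ball (0 : EuclideanSpace ℝ (Fin (m+1))) (R k) := by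
      ext q
      simp only [hS, Set.mem_setOf_eq, Set.mem_diff, Metric.mem_ball, dist_zero_right, not_lt]
      tauto
    rw [hdiff, measure_diff (Metric.ball_subset_ball (hR_mono k))
      measurableSet_ball.nullMeasurableSet measure_ball_lt_top.ne,
      Measure.addHaar_ball _ _ (hR_nonneg (k+1)), Measure.addHaar_ball _ _ (hR_nonneg k),
      hfinrank, ← hBdef,
      ← ENNReal.sub_mul (fun _ _ => hBtop),
      ← ENNReal.ofReal_sub _ (pow_nonneg (hR_nonneg k) _)]
  -- lower bound on shell volume
  have hvol_lb : ∀ k, ENNReal.ofReal (β ^ m * (ε / 2 ^ k / (2 * Real.sqrt b))) * B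
      ≤ volume (S k) := by
    intro k
    rw [hSvol k]
    apply mul_le_mul_left (ENNReal.ofReal_le_ofReal _)
    have h1 : R k ^ m * (R (k+1) - R k) ≤ R (k+1) ^ (m+1) - R k ^ (m+1) :=
      aux_pow m (hR_nonneg k) (hR_mono k)
    have hβm : β ^ m ≤ R k ^ m := pow_le_pow_left₀ hβ0.le (hR_lb k) m
    have hgap : ε / 2 ^ k / (2 * Real.sqrt b) ≤ R (k+1) - R k := by
      have hsq : R (k+1) ^ 2 - R k ^ 2 = ε / 2 ^ k := by
        rw [hRsq, hRsq]
        have h := hsk_gap k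
        rw [pow_succ] at h
        have := h2k k
        field_simp at h ⊢
        linarith
      have hsum : R (k+1) + R k ≤ 2 * Real.sqrt b := by
        linarith [(hR_ub k).le, (hR_ub (k+1)).le]
      have hsb : 0 < Real.sqrt b := Real.sqrt_pos.2 hb
      rw [div_le_iff₀ (by positivity)]
      have hRd : 0 ≤ R (k+1) - R k := by linarith [hR_mono k]
      nlinarith [mul_le_mul_of_nonneg_left hsum hRd]
    calc β ^ m * (ε / 2 ^ k / (2 * Real.sqrt b))
        ≤ R k ^ m * (R (k+1) - R k) :=
          mul_le_mul hβm hgap (by positivity) (pow_nonneg (hR_nonneg k) m)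
      _ ≤ _ := h1
  -- pointwise lower bound of the integrand on each shell
  have hptwise : ∀ k, ∀ q ∈ S k,
      ENNReal.ofReal ((b/2) * ((c * (ε / 2 ^ k))⁻¹) ^ 2) ≤ f q := by
    intro k q hq
    obtain ⟨hq1, hq2⟩ := hq
    have hnsq1 : 2 * sk k ≤ ‖q‖ ^ 2 := by
      rw [← hRsq k]; exact pow_le_pow_left₀ (hR_nonneg k) hq1 2
    have hnsq2 : ‖q‖ ^ 2 < 2 * sk (k+1) := by
      rw [← hRsq (k+1)]
      exact pow_lt_pow_left₀ hq2 (norm_nonneg q) two_ne_zero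
    have hσ1 : sk k ≤ ‖q‖ ^ 2 / 2 := by linarith
    have hσ2 : ‖q‖ ^ 2 / 2 < b / 2 := by linarith [hsk_lt (k+1)]
    have hσmem : ‖q‖ ^ 2 / 2 ∈ Set.Ico s₀ (b/2) :=
      ⟨le_trans has₀ (le_trans (hsk_ge k) hσ1), hσ2⟩
    have hU' : (c * (b/2 - ‖q‖ ^ 2 / 2))⁻¹ ≤ U' (‖q‖ ^ 2 / 2) := hkey _ hσmem
    have hgap1 : b/2 - ‖q‖ ^ 2 / 2 ≤ ε / 2 ^ k := by
      have h := hsk k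
      have : b/2 - sk k = ε / 2 ^ k := by rw [h]; ring
      linarith
    have hgap0 : 0 < b/2 - ‖q‖ ^ 2 / 2 := by linarith
    have hinvle : (c * (ε / 2 ^ k))⁻¹ ≤ (c * (b/2 - ‖q‖ ^ 2 / 2))⁻¹ := by
      apply inv_anti₀ (by positivity)
      exact mul_le_mul_of_nonneg_left hgap1 hc.le
    have hU'pos : 0 < U' (‖q‖ ^ 2 / 2) :=
      lt_of_lt_of_le (by positivity) hU'
    apply ENNReal.ofReal_le_ofReal
    have hq_lb : b/2 ≤ ‖q‖ ^ 2 := by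
      have h1 : b/2 ≤ 2 * a := by linarith
      linarith [hsk_ge k]
    apply mul_le_mul hq_lb ?_ (by positivity) (by positivity)
    exact pow_le_pow_left₀ (by positivity) (le_trans hinvle hU') 2
  -- each shell contributes at least a fixed positive amount
  have hsb : 0 < Real.sqrt b := Real.sqrt_pos.2 hb
  obtain ⟨C₀, hC₀def⟩ : ∃ C₀ : ℝ,
      C₀ = (b/2) * β ^ m / (c ^ 2 * (2 * Real.sqrt b) * ε) := ⟨_, rfl⟩
  have hC₀pos : 0 < C₀ := by rw [hC₀def]; positivity
  have hterm : ∀ k : ℕ, ENNReal.ofReal C₀ * B ≤ ∫⁻ q in S k, f q := by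
    intro k
    have hw0 : 0 < ε / 2 ^ k := hgapk k
    calc ENNReal.ofReal C₀ * B
        ≤ ENNReal.ofReal ((b/2) * ((c * (ε / 2 ^ k))⁻¹) ^ 2
            * (β ^ m * (ε / 2 ^ k / (2 * Real.sqrt b)))) * B := by
          apply mul_le_mul_left (ENNReal.ofReal_le_ofReal _)
          have heq : (b/2) * ((c * (ε / 2 ^ k))⁻¹) ^ 2
              * (β ^ m * (ε / 2 ^ k / (2 * Real.sqrt b)))
              = (b/2) * β ^ m / (c ^ 2 * (2 * Real.sqrt b) * (ε / 2 ^ k)) := by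
            field_simp
          rw [heq, hC₀def]
          apply div_le_div_of_nonneg_left (by positivity) (by positivity)
          exact mul_le_mul_of_nonneg_left (hgap_le k) (by positivity)
      _ = ENNReal.ofReal ((b/2) * ((c * (ε / 2 ^ k))⁻¹) ^ 2)
            * (ENNReal.ofReal (β ^ m * (ε / 2 ^ k / (2 * Real.sqrt b))) * B) := by
          rw [ENNReal.ofReal_mul (by positivity : (0:ℝ) ≤ b / 2 * ((c * (ε / 2 ^ k))⁻¹) ^ 2),
            mul_assoc]
      _ ≤ ENNReal.ofReal ((b/2) * ((c * (ε / 2 ^ k))⁻¹) ^ 2) * volume (S k) :=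
          mul_le_mul_right (hvol_lb k) _
      _ = ∫⁻ _ in S k, ENNReal.ofReal ((b/2) * ((c * (ε / 2 ^ k))⁻¹) ^ 2) :=
          (setLIntegral_const _ _).symm
      _ ≤ ∫⁻ q in S k, f q := setLIntegral_mono' (hSmeas k) (hptwise k)
  -- conclusion
  have hUsub : (⋃ k, S k) ⊆ Metric.ball (0 : EuclideanSpace ℝ (Fin (m+1))) (Real.sqrt b) := by
    apply Set.iUnion_subset
    intro k q hq
    rw [mem_ball_zero_iff]
    exact lt_trans hq.2 (hR_ub (k+1))
  have hδne : ENNReal.ofReal C₀ * B ≠ 0 :=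
    mul_ne_zero (ENNReal.ofReal_pos.2 hC₀pos).ne' hBne
  refine top_unique ?_
  calc (⊤:ℝ≥0∞) = ∑' _ : ℕ, ENNReal.ofReal C₀ * B :=
        (ENNReal.tsum_const_eq_top_of_ne_zero hδne).symm
    _ ≤ ∑' k, ∫⁻ q in S k, f q := ENNReal.tsum_le_tsum hterm
    _ = ∫⁻ q in ⋃ k, S k, f q := (lintegral_iUnion hSmeas hSdisj f).symm
    _ ≤ ∫⁻ q in Metric.ball (0 : EuclideanSpace ℝ (Fin (m+1))) (Real.sqrt b), f q :=
        lintegral_mono' (Measure.restrict_mono hUsub le_rfl) le_rfl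

/-- Under the structural hypotheses on the spring potential `U` (twice
differentiable, `U' ≥ 0`, `0 ≤ U'' ≤ c·(U')²`, `U'(s) → +∞` as `s → (b/2)⁻`), the
Lebesgue integral over the ball `D = B(0, √b) ⊂ ℝ^d` of `q ↦ ‖q‖²·[U'(‖q‖²/2)]²` is
infinite. -/
theorem stmt_3
    (d : ℕ) (hd : 1 ≤ d)
    (b c : ℝ) (hb : 0 < b) (hc : 0 < c)
    (U U' U'' : ℝ → ℝ)
    (hUderiv : ∀ s ∈ Set.Ico (0:ℝ) (b/2), HasDerivAt U (U' s) s)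
    (hU'deriv : ∀ s ∈ Set.Ico (0:ℝ) (b/2), HasDerivAt U' (U'' s) s)
    (hU'nonneg : ∀ s ∈ Set.Ico (0:ℝ) (b/2), 0 ≤ U' s)
    (hU''nonneg : ∀ s ∈ Set.Ico (0:ℝ) (b/2), 0 ≤ U'' s)
    (hU''le : ∀ s ∈ Set.Ico (0:ℝ) (b/2), U'' s ≤ c * (U' s) ^ 2)
    (hU'top : Tendsto U' (𝓝[<] (b/2)) atTop) :
    ∫⁻ q in Metric.ball (0 : EuclideanSpace ℝ (Fin d)) (Real.sqrt b),
        ENNReal.ofReal (‖q‖ ^ 2 * (U' (‖q‖ ^ 2 / 2)) ^ 2) = ⊤ := by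
  obtain ⟨s₀, hs₀, hkey⟩ := aux_key b c hb hc U' U'' hU'deriv hU''nonneg hU''le hU'top
  exact aux_main d hd b c hb hc U' s₀ hs₀ hkey
end

section
/- Let H > 0, b > 0 and r ∈ (0,1), and define the FENE-like potential U(s) := (Hb/2)·[(1 − 2s/b)^{−r} − 1] for s ∈ [0, b/2). Then: U(0) = 0, U(s) ≥ 0 and U is strictly increasing on [0, b/2); U(s) → +∞ and U'(s) → +∞ as s → (b/2)⁻; ∫_0^{b/2} U(s) ds < ∞; and U''(s) = c(s)·[U'(s)]² for all s ∈ [0, b/2), where c(s) := (2(1 + r)/(Hbr))·(1 − 2s/b)^{r} is continuous and positive on [0, b/2) with lim_{s→(b/2)⁻} c(s) = 0. -/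
open MeasureTheory Filter Set
open scoped ENNReal Topology

/-- The FENE-like potential `U(s) = (Hb/2)·[(1 − 2s/b)^{−r} − 1]` with
`r ∈ (0,1)` satisfies: `U(0) = 0`; `U ≥ 0` and `U` strictly increasing on `[0, b/2)`;
`U(s) → +∞` and `U'(s) → +∞` as `s → (b/2)⁻`; `U` is integrable on `(0, b/2)`; and
`U''(s) = c(s)·[U'(s)]²` on `[0, b/2)` where `c(s) = (2(1+r)/(Hbr))·(1 − 2s/b)^r` is
continuous and positive on `[0, b/2)` with `c(s) → 0` as `s → (b/2)⁻`. -/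
theorem stmt_7
    (H b r : ℝ) (hH : 0 < H) (hb : 0 < b) (hr : r ∈ Set.Ioo (0:ℝ) 1)
    (U U' U'' c : ℝ → ℝ)
    (hU : ∀ s, U s = H * b / 2 * ((1 - 2 * s / b) ^ (-r) - 1))
    (hU' : ∀ s ∈ Set.Ico (0:ℝ) (b/2), HasDerivAt U (U' s) s)
    (hU'' : ∀ s ∈ Set.Ico (0:ℝ) (b/2), HasDerivAt U' (U'' s) s)
    (hc : ∀ s, c s = 2 * (1 + r) / (H * b * r) * (1 - 2 * s / b) ^ r) :
    U 0 = 0 ∧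
    (∀ s ∈ Set.Ico (0:ℝ) (b/2), 0 ≤ U s) ∧
    StrictMonoOn U (Set.Ico (0:ℝ) (b/2)) ∧
    Tendsto U (𝓝[<] (b/2)) atTop ∧
    Tendsto U' (𝓝[<] (b/2)) atTop ∧
    IntegrableOn U (Set.Ioo (0:ℝ) (b/2)) ∧
    (∀ s ∈ Set.Ico (0:ℝ) (b/2), U'' s = c s * (U' s) ^ 2) ∧
    ContinuousOn c (Set.Ico (0:ℝ) (b/2)) ∧
    (∀ s ∈ Set.Ico (0:ℝ) (b/2), 0 < c s) ∧
    Tendsto c (𝓝[<] (b/2)) (𝓝 0) := by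
  obtain ⟨hr0, hr1⟩ := hr
  have hbne : b ≠ 0 := hb.ne'
  -- basic facts about the base x = 1 - 2s/b
  have hxpos : ∀ s : ℝ, s < b / 2 → 0 < 1 - 2 * s / b := by
    intro s hs
    have : 2 * s / b < 1 := by
      rw [div_lt_one hb]; linarith
    linarith
  have hxle1 : ∀ s : ℝ, 0 ≤ s → 1 - 2 * s / b ≤ 1 := by
    intro s hs
    have : 0 ≤ 2 * s / b := by positivity
    linarith
  -- derivative of the inner map
  have hinner : ∀ s : ℝ, HasDerivAt (fun t : ℝ => 1 - 2 * t / b) (-(2 / b)) s := by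
    intro s
    have h1 : HasDerivAt (fun t : ℝ => 2 * t / b) (2 / b) s := by
      simpa [mul_comm, mul_div_assoc] using
        (((hasDerivAt_id s).const_mul (2 : ℝ)).div_const b)
    have h2 : HasDerivAt (fun t : ℝ => 1 - 2 * t / b) (0 - 2 / b) s :=
      (hasDerivAt_const s (1 : ℝ)).sub h1
    simpa using h2
  -- explicit derivative of U
  have hUder : ∀ s : ℝ, s < b / 2 →
      HasDerivAt U (H * r * (1 - 2 * s / b) ^ (-r - 1)) s := by
    intro s hs
    have hx := hxpos s hs
    have houter : HasDerivAt (fun x : ℝ => x ^ (-r))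
        (-r * (1 - 2 * s / b) ^ (-r - 1)) (1 - 2 * s / b) :=
      Real.hasDerivAt_rpow_const (Or.inl hx.ne')
    have hcomp : HasDerivAt (fun t : ℝ => (1 - 2 * t / b) ^ (-r))
        (-r * (1 - 2 * s / b) ^ (-r - 1) * -(2 / b)) s :=
      HasDerivAt.comp (h := fun t : ℝ => 1 - 2 * t / b) s houter (hinner s)
    have := ((hcomp.sub_const 1).const_mul (H * b / 2))
    have heq : H * b / 2 * (-r * (1 - 2 * s / b) ^ (-r - 1) * -(2 / b))
        = H * r * (1 - 2 * s / b) ^ (-r - 1) := by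
      field_simp
    rw [heq] at this
    exact this.congr_of_eventuallyEq (by filter_upwards with t using hU t)
  -- U' equals the explicit formula on Ico
  have hU'eq : ∀ s ∈ Set.Ico (0:ℝ) (b/2),
      U' s = H * r * (1 - 2 * s / b) ^ (-r - 1) := by
    intro s hs
    exact (hU' s hs).unique (hUder s hs.2)
  -- derivative of the explicit U' formula
  have hgder : ∀ s : ℝ, s < b / 2 →
      HasDerivAt (fun t : ℝ => H * r * (1 - 2 * t / b) ^ (-r - 1))
        (H * r * (r + 1) * (2 / b) * (1 - 2 * s / b) ^ (-r - 2)) s := by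
    intro s hs
    have hx := hxpos s hs
    have houter : HasDerivAt (fun x : ℝ => x ^ (-r - 1))
        ((-r - 1) * (1 - 2 * s / b) ^ (-r - 1 - 1)) (1 - 2 * s / b) :=
      Real.hasDerivAt_rpow_const (Or.inl hx.ne')
    have hcomp : HasDerivAt (fun t : ℝ => (1 - 2 * t / b) ^ (-r - 1))
        ((-r - 1) * (1 - 2 * s / b) ^ (-r - 1 - 1) * -(2 / b)) s :=
      HasDerivAt.comp (h := fun t : ℝ => 1 - 2 * t / b) s houter (hinner s)
    have := hcomp.const_mul (H * r)
    have heq : H * r * ((-r - 1) * (1 - 2 * s / b) ^ (-r - 1 - 1) * -(2 / b))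
        = H * r * (r + 1) * (2 / b) * (1 - 2 * s / b) ^ (-r - 2) := by
      have : (-r - 1 - 1 : ℝ) = -r - 2 := by ring
      rw [this]; ring
    rwa [heq] at this
  -- value of U''
  have hU''eq : ∀ s ∈ Set.Ico (0:ℝ) (b/2),
      U'' s = H * r * (r + 1) * (2 / b) * (1 - 2 * s / b) ^ (-r - 2) := by
    intro s hs
    have hud : UniqueDiffWithinAt ℝ (Set.Ico (0:ℝ) (b/2)) s :=
      uniqueDiffOn_Ico 0 (b/2) s hs
    have h1 : HasDerivWithinAt U' (U'' s) (Set.Ico (0:ℝ) (b/2)) s :=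
      (hU'' s hs).hasDerivWithinAt
    have h2 : HasDerivWithinAt U'
        (H * r * (r + 1) * (2 / b) * (1 - 2 * s / b) ^ (-r - 2))
        (Set.Ico (0:ℝ) (b/2)) s :=
      ((hgder s hs.2).hasDerivWithinAt).congr (fun t ht => hU'eq t ht) (hU'eq s hs)
    rw [← h1.derivWithin hud, h2.derivWithin hud]
  -- U 0 = 0
  have hU0 : U 0 = 0 := by
    rw [hU 0]
    norm_num
  -- nonnegativity
  have hUnn : ∀ s ∈ Set.Ico (0:ℝ) (b/2), 0 ≤ U s := by
    intro s hs
    rw [hU s]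
    have h1 : (1:ℝ) ≤ (1 - 2 * s / b) ^ (-r) :=
      Real.one_le_rpow_of_pos_of_le_one_of_nonpos (hxpos s hs.2) (hxle1 s hs.1)
        (by linarith)
    have : 0 ≤ (1 - 2 * s / b) ^ (-r) - 1 := by linarith
    positivity
  -- continuity of U on Ico
  have hUcont : ContinuousOn U (Set.Ico (0:ℝ) (b/2)) := by
    intro s hs
    exact ((hU' s hs).continuousAt).continuousWithinAt
  -- strict monotonicity
  have hmono : StrictMonoOn U (Set.Ico (0:ℝ) (b/2)) := by
    apply strictMonoOn_of_deriv_pos (convex_Ico 0 (b/2)) hUcont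
    intro s hs
    rw [interior_Ico] at hs
    rw [(hUder s hs.2).deriv]
    have hx := hxpos s hs.2
    positivity
  -- Tendsto of the base to 0 from the right
  have hbase : Tendsto (fun s : ℝ => 1 - 2 * s / b) (𝓝[<] (b/2)) (𝓝[>] (0:ℝ)) := by
    apply tendsto_nhdsWithin_of_tendsto_nhds_of_eventually_within
    · have : Tendsto (fun s : ℝ => 1 - 2 * s / b) (𝓝 (b/2)) (𝓝 (1 - 2 * (b/2) / b)) :=
        (Continuous.tendsto (by fun_prop) _)
      rw [show (1 - 2 * (b/2) / b : ℝ) = 0 by field_simp; norm_num] at this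
      exact this.mono_left nhdsWithin_le_nhds
    · filter_upwards [self_mem_nhdsWithin] with s hs
      exact hxpos s hs
  -- x ↦ x^(-p) tends to atTop as x → 0⁺ for p > 0
  have hrpow_top : ∀ p : ℝ, 0 < p →
      Tendsto (fun x : ℝ => x ^ (-p)) (𝓝[>] (0:ℝ)) atTop := by
    intro p hp
    have h1 : Tendsto (fun x : ℝ => x ^ p) (𝓝[>] (0:ℝ)) (𝓝[>] (0:ℝ)) := by
      apply tendsto_nhdsWithin_of_tendsto_nhds_of_eventually_within
      · have : Tendsto (fun x : ℝ => x ^ p) (𝓝 (0:ℝ)) (𝓝 ((0:ℝ) ^ p)) :=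
          (Real.continuousAt_rpow_const 0 p (Or.inr hp.le)).tendsto
        rw [Real.zero_rpow hp.ne'] at this
        exact this.mono_left nhdsWithin_le_nhds
      · filter_upwards [self_mem_nhdsWithin] with x hx
        exact Real.rpow_pos_of_pos hx p
    have h2 := h1.inv_tendsto_nhdsGT_zero
    apply h2.congr'
    filter_upwards [self_mem_nhdsWithin] with x hx
    simp [Real.rpow_neg (le_of_lt hx)]
  -- U → atTop
  have hUtop : Tendsto U (𝓝[<] (b/2)) atTop := by
    have h1 : Tendsto (fun s : ℝ => (1 - 2 * s / b) ^ (-r)) (𝓝[<] (b/2)) atTop :=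
      (hrpow_top r hr0).comp hbase
    have h2 : Tendsto (fun s : ℝ => H * b / 2 * ((1 - 2 * s / b) ^ (-r) - 1))
        (𝓝[<] (b/2)) atTop :=
      (h1.atTop_add tendsto_const_nhds).const_mul_atTop (by positivity)
    exact h2.congr (fun s => (hU s).symm)
  -- U' → atTop
  have hU'top : Tendsto U' (𝓝[<] (b/2)) atTop := by
    have h1 : Tendsto (fun s : ℝ => (1 - 2 * s / b) ^ (-(r+1))) (𝓝[<] (b/2)) atTop :=
      (hrpow_top (r+1) (by linarith)).comp hbase
    have h2 : Tendsto (fun s : ℝ => H * r * (1 - 2 * s / b) ^ (-r - 1))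
        (𝓝[<] (b/2)) atTop := by
      have := h1.const_mul_atTop (show (0:ℝ) < H * r by positivity)
      simpa [show -(r+1) = -r - 1 by ring] using this
    apply h2.congr'
    have hmem : Set.Ioo (0:ℝ) (b/2) ∈ 𝓝[<] (b/2) := by
      apply Ioo_mem_nhdsLT_of_mem
      exact ⟨by positivity, le_refl _⟩
    filter_upwards [hmem] with s hs
    exact (hU'eq s ⟨hs.1.le, hs.2⟩).symm
  -- integrability
  have hInt : IntegrableOn U (Set.Ioo (0:ℝ) (b/2)) := by
    have h0 : IntervalIntegrable (fun x : ℝ => x ^ (-r)) volume 0 (b/2) :=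
      intervalIntegral.intervalIntegrable_rpow' (by linarith)
    have h1 : IntervalIntegrable (fun x : ℝ => (b/2 - x) ^ (-r)) volume 0 (b/2) := by
      have := h0.comp_sub_left (b/2)
      simpa using this.symm
    have h2 : IntegrableOn (fun x : ℝ => (b/2 - x) ^ (-r)) (Set.Ioo (0:ℝ) (b/2)) := by
      rw [← intervalIntegrable_iff_integrableOn_Ioo_of_le (by positivity)]
      exact h1
    have h3 : IntegrableOn
        (fun s : ℝ => H * b / 2 * ((2/b) ^ (-r) * (b/2 - s) ^ (-r)) - H * b / 2)
        (Set.Ioo (0:ℝ) (b/2)) := by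
      apply Integrable.sub
      · exact ((h2.const_mul ((2/b) ^ (-r))).const_mul (H * b / 2))
      · exact integrableOn_const measure_Ioo_lt_top.ne
    apply h3.congr_fun _ measurableSet_Ioo
    intro s hs
    have hxs : (1 - 2 * s / b) = (2/b) * (b/2 - s) := by field_simp
    have h2b : (0:ℝ) ≤ 2/b := by positivity
    have hbs : (0:ℝ) ≤ b/2 - s := by linarith [hs.2]
    rw [hU s, hxs, Real.mul_rpow h2b hbs]
    ring
  -- U'' = c * U'^2
  have hident : ∀ s ∈ Set.Ico (0:ℝ) (b/2), U'' s = c s * (U' s) ^ 2 := by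
    intro s hs
    have hx := hxpos s hs.2
    rw [hU''eq s hs, hU'eq s hs, hc s]
    have hne : (1 - 2 * s / b) ≠ 0 := hx.ne'
    have hexp : ((1 - 2 * s / b) ^ (-r - 1)) ^ 2 = (1 - 2 * s / b) ^ (-2*r - 2) := by
      rw [← Real.rpow_natCast ((1 - 2 * s / b) ^ (-r - 1)) 2,
        ← Real.rpow_mul hx.le]
      norm_num; ring_nf
    rw [mul_pow, hexp]
    rw [show (2 * (1 + r) / (H * b * r) * (1 - 2 * s / b) ^ r *
        ((H * r) ^ 2 * (1 - 2 * s / b) ^ (-2*r - 2)) : ℝ)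
      = (2 * (1 + r) / (H * b * r) * (H * r) ^ 2) *
        ((1 - 2 * s / b) ^ r * (1 - 2 * s / b) ^ (-2*r - 2)) by ring]
    rw [← Real.rpow_add hx]
    have he : r + (-2*r - 2) = -r - 2 := by ring
    rw [he]
    have hcoef : 2 * (1 + r) / (H * b * r) * (H * r) ^ 2
        = H * r * (r + 1) * (2 / b) := by
      field_simp; ring
    rw [hcoef]
  -- continuity of c
  have hccont : ContinuousOn c (Set.Ico (0:ℝ) (b/2)) := by
    have : ContinuousOn (fun s : ℝ => 2 * (1 + r) / (H * b * r) * (1 - 2 * s / b) ^ r)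
        (Set.Ico (0:ℝ) (b/2)) := by
      apply ContinuousOn.mul continuousOn_const
      apply ContinuousOn.rpow_const
      · fun_prop
      · intro s hs
        exact Or.inr hr0.le
    exact this.congr (fun s _ => hc s)
  -- positivity of c
  have hcpos : ∀ s ∈ Set.Ico (0:ℝ) (b/2), 0 < c s := by
    intro s hs
    rw [hc s]
    have hx := hxpos s hs.2
    have h1 : (0:ℝ) < 2 * (1 + r) / (H * b * r) := by positivity
    exact mul_pos h1 (Real.rpow_pos_of_pos hx r)
  -- c → 0
  have hc0 : Tendsto c (𝓝[<] (b/2)) (𝓝 0) := by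
    have h1 : Tendsto (fun x : ℝ => x ^ r) (𝓝[>] (0:ℝ)) (𝓝 0) := by
      have : Tendsto (fun x : ℝ => x ^ r) (𝓝 (0:ℝ)) (𝓝 ((0:ℝ) ^ r)) :=
        (Real.continuousAt_rpow_const 0 r (Or.inr hr0.le)).tendsto
      rw [Real.zero_rpow hr0.ne'] at this
      exact this.mono_left nhdsWithin_le_nhds
    have h2 : Tendsto (fun s : ℝ => (1 - 2 * s / b) ^ r) (𝓝[<] (b/2)) (𝓝 0) :=
      h1.comp hbase
    have h3 := h2.const_mul (2 * (1 + r) / (H * b * r))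
    rw [mul_zero] at h3
    exact h3.congr (fun s => (hc s).symm)
  exact ⟨hU0, hUnn, hmono, hUtop, hU'top, hInt, hident, hccont, hcpos, hc0⟩
end

section
/- Let (Q, μ) and (D, ν) be σ-finite measure spaces, α ∈ (0, 1), and let θ : Q → [0, ∞] and φ : Q × D → [0, ∞] be measurable (with the convention that φ·|log φ|^α and φ·|log φ| vanish where φ = 0). Then ∫_Q θ(x)^{1+α}·(∫_D φ(x,q)·|log φ(x,q)|^α dν(q)) dμ(x) ≤ (ess sup_{x ∈ Q} ∫_D φ(x,q) dν(q))^{1−α} · ((1−α)·∫_Q θ^{(1+α)/(1−α)} dμ + α·∫_Q ∫_D φ·|log φ| dν dμ), where all integrals are Lebesgue integrals of nonnegative functions with values in [0, ∞]. -/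
open MeasureTheory Filter Set
open scoped ENNReal Topology

/-- Equi-integrability estimate for `θⁿφⁿ`: for σ-finite measure spaces
`(Q, μ)`, `(D, ν)`, `α ∈ (0,1)`, and measurable nonnegative `θ : Q → [0,∞)`,
`φ : Q × D → [0,∞)` (with the convention that `φ·|log φ|^α` and `φ·|log φ|` vanish where
`φ = 0`, as is the case with Lean's `Real.log 0 = 0`),
`∫_Q θ^{1+α}·(∫_D φ·|log φ|^α dν) dμ ≤ (ess sup_{x} ∫_D φ dν)^{1−α} ·
  ((1−α)·∫_Q θ^{(1+α)/(1−α)} dμ + α·∫_Q ∫_D φ·|log φ| dν dμ)`. -/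
theorem stmt_18
    {Q D : Type*} [MeasurableSpace Q] [MeasurableSpace D]
    (μ : Measure Q) (ν : Measure D) [SigmaFinite μ] [SigmaFinite ν]
    (α : ℝ) (hα : α ∈ Set.Ioo (0:ℝ) 1)
    (θ : Q → ℝ) (φ : Q × D → ℝ)
    (hθ : Measurable θ) (hφ : Measurable φ)
    (hθnn : ∀ x, 0 ≤ θ x) (hφnn : ∀ p, 0 ≤ φ p) :
    ∫⁻ x, ENNReal.ofReal (θ x ^ (1 + α)) *
        (∫⁻ q, ENNReal.ofReal (φ (x, q) * |Real.log (φ (x, q))| ^ α) ∂ν) ∂μ ≤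
      (essSup (fun x => ∫⁻ q, ENNReal.ofReal (φ (x, q)) ∂ν) μ) ^ (1 - α) *
        (ENNReal.ofReal (1 - α) * ∫⁻ x, ENNReal.ofReal (θ x ^ ((1 + α) / (1 - α))) ∂μ +
          ENNReal.ofReal α *
            ∫⁻ x, ∫⁻ q, ENNReal.ofReal (φ (x, q) * |Real.log (φ (x, q))|) ∂ν ∂μ) := by
  obtain ⟨hα0, hα1⟩ := hα
  have h1α : (0:ℝ) < 1 - α := by linarith
  have hpq : Real.HolderConjugate (1 / (1 - α)) (1 / α) := by
    rw [Real.holderConjugate_iff]; constructor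
    · rw [lt_div_iff₀ h1α]; linarith
    · rw [one_div, one_div, inv_inv, inv_inv]; ring
  set F : Q × D → ℝ≥0∞ := fun p => ENNReal.ofReal (φ p) with hFdef
  set G : Q × D → ℝ≥0∞ := fun p => ENNReal.ofReal (φ p * |Real.log (φ p)|) with hGdef
  have mF : Measurable F := ENNReal.measurable_ofReal.comp hφ
  have mG : Measurable G :=
    ENNReal.measurable_ofReal.comp (hφ.mul (Real.measurable_log.comp hφ).abs)
  set T : Q → ℝ≥0∞ := fun x => ENNReal.ofReal (θ x ^ (1 + α)) with hTdef
  have mT : Measurable T := ENNReal.measurable_ofReal.comp (hθ.pow_const _)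
  set I : Q → ℝ≥0∞ := fun x => ∫⁻ q, F (x, q) ∂ν with hIdef
  set J : Q → ℝ≥0∞ := fun x => ∫⁻ q, G (x, q) ∂ν with hJdef
  have mJ : Measurable J := mG.lintegral_prod_right'
  set S : ℝ≥0∞ := essSup I μ with hSdef
  have e1 : ∀ y : ℝ≥0∞, (y ^ (1 - α)) ^ (1 / (1 - α)) = y := fun y => by
    rw [← ENNReal.rpow_mul, mul_one_div, div_self h1α.ne', ENNReal.rpow_one]
  have e2 : ∀ y : ℝ≥0∞, (y ^ α) ^ (1 / α) = y := fun y => by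
    rw [← ENNReal.rpow_mul, mul_one_div, div_self hα0.ne', ENNReal.rpow_one]
  -- pointwise factorization
  have key : ∀ p : Q × D,
      ENNReal.ofReal (φ p * |Real.log (φ p)| ^ α) = F p ^ (1 - α) * G p ^ α := by
    intro p
    have h0 : 0 ≤ φ p := hφnn p
    have hsum : (1 - α) + α = 1 := by ring
    have hreal : φ p * |Real.log (φ p)| ^ α
        = φ p ^ (1 - α) * (φ p * |Real.log (φ p)|) ^ α := by
      rw [Real.mul_rpow h0 (abs_nonneg _), ← mul_assoc,
        ← Real.rpow_add' h0 (by rw [hsum]; norm_num), hsum, Real.rpow_one]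
    rw [hreal, ENNReal.ofReal_mul (Real.rpow_nonneg h0 _),
      ENNReal.ofReal_rpow_of_nonneg h0 h1α.le,
      ENNReal.ofReal_rpow_of_nonneg (mul_nonneg h0 (abs_nonneg _)) hα0.le]
  -- Hölder in the inner variable
  have holder : ∀ x, (∫⁻ q, F (x, q) ^ (1 - α) * G (x, q) ^ α ∂ν)
      ≤ I x ^ (1 - α) * J x ^ α := by
    intro x
    have hf : AEMeasurable (fun q => F (x, q) ^ (1 - α)) ν :=
      ((ENNReal.continuous_rpow_const.measurable).comp
        (mF.comp measurable_prodMk_left)).aemeasurable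
    have hg : AEMeasurable (fun q => G (x, q) ^ α) ν :=
      ((ENNReal.continuous_rpow_const.measurable).comp
        (mG.comp measurable_prodMk_left)).aemeasurable
    have := ENNReal.lintegral_mul_le_Lp_mul_Lq ν hpq hf hg
    simp only [Pi.mul_apply, e1, e2, one_div_one_div] at this
    exact this
  -- Young's inequality pointwise in x
  have young : ∀ x, T x * J x ^ α
      ≤ ENNReal.ofReal (1 - α) * ENNReal.ofReal (θ x ^ ((1 + α) / (1 - α)))
        + ENNReal.ofReal α * J x := by
    intro x
    have h := ENNReal.young_inequality (T x) (J x ^ α) hpq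
    rw [e2] at h
    have hTp : T x ^ (1 / (1 - α)) = ENNReal.ofReal (θ x ^ ((1 + α) / (1 - α))) := by
      show ENNReal.ofReal (θ x ^ (1 + α)) ^ (1 / (1 - α))
          = ENNReal.ofReal (θ x ^ ((1 + α) / (1 - α)))
      rw [ENNReal.ofReal_rpow_of_nonneg (Real.rpow_nonneg (hθnn x) _)
        (by positivity : (0:ℝ) ≤ 1 / (1 - α)), ← Real.rpow_mul (hθnn x), mul_one_div]
    have hdiv1 : T x ^ (1 / (1 - α)) / ENNReal.ofReal (1 / (1 - α))
        = ENNReal.ofReal (1 - α) * ENNReal.ofReal (θ x ^ ((1 + α) / (1 - α))) := by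
      rw [ENNReal.div_eq_inv_mul, ← ENNReal.ofReal_inv_of_pos (by positivity), hTp,
        one_div, inv_inv]
    have hdiv2 : J x / ENNReal.ofReal (1 / α) = ENNReal.ofReal α * J x := by
      rw [ENNReal.div_eq_inv_mul, ← ENNReal.ofReal_inv_of_pos (by positivity),
        one_div, inv_inv]
    rw [hdiv1, hdiv2] at h
    exact h
  have hIS : ∀ᵐ x ∂μ, I x ≤ S := ENNReal.ae_le_essSup I
  calc
    ∫⁻ x, T x * (∫⁻ q, ENNReal.ofReal (φ (x, q) * |Real.log (φ (x, q))| ^ α) ∂ν) ∂μ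
        = ∫⁻ x, T x * (∫⁻ q, F (x, q) ^ (1 - α) * G (x, q) ^ α ∂ν) ∂μ := by
          simp_rw [key]
    _ ≤ ∫⁻ x, T x * (I x ^ (1 - α) * J x ^ α) ∂μ :=
          lintegral_mono fun x => mul_le_mul_right (holder x) _
    _ ≤ ∫⁻ x, S ^ (1 - α) * (T x * J x ^ α) ∂μ := by
          refine lintegral_mono_ae ?_
          filter_upwards [hIS] with x hx
          calc T x * (I x ^ (1 - α) * J x ^ α)
              = I x ^ (1 - α) * (T x * J x ^ α) := by ring
            _ ≤ S ^ (1 - α) * (T x * J x ^ α) :=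
                mul_le_mul_left (ENNReal.rpow_le_rpow hx h1α.le) _
    _ = S ^ (1 - α) * ∫⁻ x, T x * J x ^ α ∂μ :=
          lintegral_const_mul _ (mT.mul (ENNReal.continuous_rpow_const.measurable.comp mJ))
    _ ≤ S ^ (1 - α) * ∫⁻ x, (ENNReal.ofReal (1 - α) * ENNReal.ofReal (θ x ^ ((1 + α) / (1 - α)))
          + ENNReal.ofReal α * J x) ∂μ :=
          mul_le_mul_right (lintegral_mono fun x => young x) _
    _ = S ^ (1 - α) *
        (ENNReal.ofReal (1 - α) * ∫⁻ x, ENNReal.ofReal (θ x ^ ((1 + α) / (1 - α))) ∂μ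
          + ENNReal.ofReal α * ∫⁻ x, J x ∂μ) := by
          rw [lintegral_add_left (((hθ.pow_const _).ennreal_ofReal).const_mul _),
            lintegral_const_mul _ ((hθ.pow_const _).ennreal_ofReal),
            lintegral_const_mul _ mJ]
end
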